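/- Let ρ and A be real numbers with 1 ≤ ρ ≤ 2 and 0.5 ≤ A ≤ 3/ρ − 1. Then (1.5·√ρ + 2/√ρ + A·√ρ + 1/√ρ) / (2·√2 + 2·√A) ≤ 1.203. -/
import Mathlib

set_option maxHeartbeats 800000 in
private lemma sibling_core (s t : ℝ)
    (hs1 : 1 ≤ s) (ht1 : 0.707 ≤ t)
    (hconstr : s ^ 2 * (1 + t ^ 2) ≤ 3) :
    1.5 * s ^ 2 + 3 + t ^ 2 * s ^ 2 ≤ 3.402 * s + 2.406 * (s * t) := by
  nlinarith [mul_nonneg (sub_nonneg.mpr hs1) (sub_nonneg.mpr ht1),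
    sq_nonneg (s - 1), sq_nonneg (s*t - 1), sq_nonneg (s*t - 0.707),
    mul_nonneg (sub_nonneg.mpr hs1) (sq_nonneg (s*t - 1)),
    mul_nonneg (sub_nonneg.mpr ht1) (sq_nonneg (s - 1))]

theorem simple_sibling_side_bound
    (ρ A : ℝ) (hρ1 : 1 ≤ ρ) (hρ2 : ρ ≤ 2)
    (hA1 : 0.5 ≤ A) (hA2 : A ≤ 3 / ρ - 1) :
    (1.5 * Real.sqrt ρ + 2 / Real.sqrt ρ + A * Real.sqrt ρ + 1 / Real.sqrt ρ)
      / (2 * Real.sqrt 2 + 2 * Real.sqrt A) ≤ 1.203 := by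
  have hρ0 : (0:ℝ) < ρ := by linarith
  have hA0 : (0:ℝ) < A := by norm_num at hA1 ⊢; linarith
  set s := Real.sqrt ρ with hsdef
  set t := Real.sqrt A with htdef
  set r := Real.sqrt 2 with hrdef
  have hs : s ^ 2 = ρ := Real.sq_sqrt hρ0.le
  have ht : t ^ 2 = A := Real.sq_sqrt hA0.le
  have hr : r ^ 2 = 2 := Real.sq_sqrt (by norm_num)
  have hspos : 0 < s := Real.sqrt_pos.mpr hρ0
  have htpos : 0 < t := Real.sqrt_pos.mpr hA0
  have hrpos : 0 < r := Real.sqrt_pos.mpr (by norm_num)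
  have hr14 : 1.414 ≤ r := by nlinarith
  have hs1 : 1 ≤ s ^ 2 := by rw [hs]; exact hρ1
  have ht1 : 0.707 ≤ t := by nlinarith
  have hconstr : s ^ 2 * (1 + t ^ 2) ≤ 3 := by
    have hA3 : A + 1 ≤ 3 / ρ := by linarith
    have := (le_div_iff₀ hρ0).mp hA3
    nlinarith
  have hslb : 1 ≤ s := by nlinarith
  have hD : 0 < 2 * r + 2 * t := by linarith
  rw [div_le_iff₀ hD]
  have hf := sibling_core s t hslb ht1 hconstr
  have key : 1.5 * s ^ 2 + 3 + t ^ 2 * s ^ 2 ≤ 1.203 * (2 * r + 2 * t) * s := by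
    have hsr : 1.414 * s ≤ r * s :=
      mul_le_mul_of_nonneg_right hr14 hspos.le
    nlinarith [hf, hsr]
  have goal' : 1.5 * s + 2 / s + A * s + 1 / s
      = (1.5 * s ^ 2 + 3 + t ^ 2 * s ^ 2) / s := by
    rw [← ht]; field_simp; ring
  rw [goal', div_le_iff₀ hspos]
  linarith [key]
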